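/- Let t ≥ 2 and m ≥ 1 be integers, and let λ be a (t, mt+1)-core partition with distinct parts whose size is maximal among all (t, mt+1)-core partitions with distinct parts. Then for every 1 ≤ i ≤ t−1, n_i(λ) = 0 or n_i(λ) = m. -/

import Mathlib

/-- A partition: a finite weakly decreasing list of positive integers. -/
structure Partn where
  parts : List ℕ
  pos : ∀ p ∈ parts, 0 < p
  sorted : parts.Pairwise (· ≥ ·)

namespace Partn

/-- The size of a partition: the sum of its parts. -/
def size (l : Partn) : ℕ := l.parts.sum

/-- The number of rows `k` (0-indexed) with `λ_k ≥ j` (the length of column `j`). -/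
def colLen (l : Partn) (j : ℕ) : ℕ := (l.parts.filter (fun p => j ≤ p)).length

/-- The hook length of the box in row `i` (0-indexed) and column `j` (1-indexed):
`λ_i − j + #{k : λ_k ≥ j} − i + 1` (with 1-indexed rows). -/
def hook (l : Partn) (i j : ℕ) : ℕ :=
  (l.parts.getD i 0 - j) + (l.colLen j - (i + 1)) + 1

/-- A partition is a `t`-core if none of its hook lengths is divisible by `t`. -/
def IsCore (t : ℕ) (l : Partn) : Prop :=
  ∀ i j : ℕ, i < l.parts.length → 1 ≤ j → j ≤ l.parts.getD i 0 → ¬ (t ∣ l.hook i j)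

/-- A partition has distinct parts if its parts are strictly decreasing. -/
def DistinctParts (l : Partn) : Prop := l.parts.Pairwise (· > ·)

/-- The β-set of a partition: `{λ_i + ℓ − i : 1 ≤ i ≤ ℓ}` (1-indexed). -/
def betaSet (l : Partn) : Finset ℕ :=
  (Finset.range l.parts.length).image
    (fun i => l.parts.getD i 0 + (l.parts.length - 1 - i))

/-- `nFn t i l` is the number of elements of the β-set of `l` congruent to `i` mod `t`. -/
def nFn (t i : ℕ) (l : Partn) : ℕ :=
  (l.betaSet.filter (fun x => x % t = i)).card

/-! ### Auxiliary lemmas -/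

lemma parts_getElem_pos (l : Partn) {i : ℕ} (h : i < l.parts.length) : 0 < l.parts[i] :=
  l.pos _ (l.parts.getElem_mem h)

lemma parts_anti (l : Partn) {i k : ℕ} (hik : i < k) (hk : k < l.parts.length) :
    l.parts[k] ≤ l.parts[i]'(hik.trans hk) :=
  List.pairwise_iff_getElem.mp l.sorted i k (hik.trans hk) hk hik

/-- The `i`-th β-number. -/
def beta (l : Partn) (i : ℕ) : ℕ := l.parts.getD i 0 + (l.parts.length - 1 - i)

lemma getD_eq (l : Partn) {i : ℕ} (h : i < l.parts.length) :
    l.parts.getD i 0 = l.parts[i] := List.getD_eq_getElem _ _ h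

lemma beta_lt_beta (l : Partn) {i k : ℕ} (hik : i < k) (hk : k < l.parts.length) :
    l.beta k < l.beta i := by
  unfold beta
  rw [getD_eq l hk, getD_eq l (hik.trans hk)]
  have h1 := parts_anti l hik hk
  omega

lemma mem_betaSet_iff {l : Partn} {x : ℕ} :
    x ∈ l.betaSet ↔ ∃ i, ∃ _ : i < l.parts.length, l.beta i = x := by
  unfold betaSet
  simp only [Finset.mem_image, Finset.mem_range]
  constructor
  · rintro ⟨i, hi, h⟩; exact ⟨i, hi, h⟩
  · rintro ⟨i, hi, h⟩; exact ⟨i, hi, h⟩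

lemma beta_mem (l : Partn) {i : ℕ} (h : i < l.parts.length) : l.beta i ∈ l.betaSet :=
  mem_betaSet_iff.mpr ⟨i, h, rfl⟩

lemma one_le_of_mem_betaSet {l : Partn} {x : ℕ} (h : x ∈ l.betaSet) : 1 ≤ x := by
  obtain ⟨i, hi, rfl⟩ := mem_betaSet_iff.mp h
  have := l.parts_getElem_pos hi
  unfold beta; rw [getD_eq l hi]; omega

lemma beta_injOn (l : Partn) {i k : ℕ} (hi : i < l.parts.length) (hk : k < l.parts.length)
    (h : l.beta i = l.beta k) : i = k := by
  rcases lt_trichotomy i k with h' | h' | h'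
  · exact absurd h (by have := l.beta_lt_beta h' hk; omega)
  · exact h'
  · exact absurd h (by have := l.beta_lt_beta h' hi; omega)

lemma card_betaSet (l : Partn) : l.betaSet.card = l.parts.length := by
  unfold betaSet
  rw [Finset.card_image_of_injOn, Finset.card_range]
  intro i hi k hk h
  simp only [Finset.mem_coe, Finset.mem_range] at hi hk
  exact l.beta_injOn hi hk h

lemma betaSet_eq (l : Partn) : l.betaSet = (Finset.range l.parts.length).image l.beta := rfl

lemma sum_betaSet (l : Partn) :
    ∑ x ∈ l.betaSet, x = l.size + ∑ i ∈ Finset.range l.parts.length, i := by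
  rw [betaSet_eq, Finset.sum_image (fun i hi k hk h => l.beta_injOn
    (Finset.mem_range.mp hi) (Finset.mem_range.mp hk) h)]
  have h1 : ∑ i ∈ Finset.range l.parts.length, l.beta i
      = (∑ i ∈ Finset.range l.parts.length, l.parts.getD i 0)
        + ∑ i ∈ Finset.range l.parts.length, (l.parts.length - 1 - i) := by
    unfold beta; exact Finset.sum_add_distrib
  have h2 : ∑ i ∈ Finset.range l.parts.length, (l.parts.length - 1 - i)
      = ∑ i ∈ Finset.range l.parts.length, i := Finset.sum_range_reflect (fun i => i) _
  have h3 : ∑ i ∈ Finset.range l.parts.length, l.parts.getD i 0 = l.size := by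
    rw [← Fin.sum_univ_eq_sum_range (fun i => l.parts.getD i 0) l.parts.length]
    unfold size
    rw [← Fin.sum_univ_getElem l.parts]
    exact Finset.sum_congr rfl (fun i _ => l.getD_eq i.2)
  rw [h1, h2, h3]

private lemma length_filter_aux (p : ℕ → Bool) : ∀ L : List ℕ,
    (L.filter p).length = ∑ i ∈ Finset.range L.length, (if p (L.getD i 0) then 1 else 0)
  | [] => by simp
  | a :: L => by
    rw [List.filter_cons, List.length_cons, Finset.sum_range_succ']
    have h0 : (a :: L).getD 0 0 = a := rfl
    have hs : ∀ i, (a :: L).getD (i + 1) 0 = L.getD i 0 := fun i => rfl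
    simp only [hs, h0]
    rw [← length_filter_aux p L]
    by_cases h : p a
    · simp [h]
    · simp [h]

lemma colLen_eq_card (l : Partn) (j : ℕ) :
    l.colLen j = ((Finset.range l.parts.length).filter (fun i => j ≤ l.parts.getD i 0)).card := by
  unfold colLen
  rw [length_filter_aux (fun p => j ≤ p) l.parts, Finset.card_filter]
  exact Finset.sum_congr rfl (fun i _ => by by_cases h : j ≤ l.parts.getD i 0 <;> simp [h])

lemma colLen_le (l : Partn) (j : ℕ) : l.colLen j ≤ l.parts.length := by
  rw [colLen_eq_card]
  calc ((Finset.range l.parts.length).filter (fun i => j ≤ l.parts.getD i 0)).card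
      ≤ (Finset.range l.parts.length).card := Finset.card_filter_le _ _
    _ = l.parts.length := Finset.card_range _

lemma lt_colLen_iff (l : Partn) {j k : ℕ} (hk : k < l.parts.length) :
    k < l.colLen j ↔ j ≤ l.parts[k] := by
  rw [colLen_eq_card]
  constructor
  · intro h
    by_contra hc
    have hsub : (Finset.range l.parts.length).filter (fun i => j ≤ l.parts.getD i 0)
        ⊆ Finset.range k := by
      intro i hi
      simp only [Finset.mem_filter, Finset.mem_range] at hi ⊢
      obtain ⟨hi1, hi2⟩ := hi
      by_contra hik
      have h1 : l.parts[i] ≤ l.parts[k] := by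
        rcases eq_or_lt_of_le (not_lt.mp hik) with rfl | h'
        · exact le_refl _
        · exact l.parts_anti h' hi1
      rw [l.getD_eq hi1] at hi2
      omega
    have := Finset.card_le_card hsub
    rw [Finset.card_range] at this
    omega
  · intro h
    have hsub : Finset.range (k + 1)
        ⊆ (Finset.range l.parts.length).filter (fun i => j ≤ l.parts.getD i 0) := by
      intro i hi
      simp only [Finset.mem_range] at hi
      have hi' : i < l.parts.length := by omega
      simp only [Finset.mem_filter, Finset.mem_range]
      refine ⟨hi', ?_⟩
      rw [l.getD_eq hi']
      rcases eq_or_lt_of_le (Nat.lt_succ_iff.mp hi) with rfl | h'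
      · exact h
      · exact le_trans h (l.parts_anti h' hk)
    have := Finset.card_le_card hsub
    rw [Finset.card_range] at this
    omega

lemma colLen_anti (l : Partn) {a b : ℕ} (h : a ≤ b) : l.colLen b ≤ l.colLen a := by
  rw [colLen_eq_card, colLen_eq_card]
  apply Finset.card_le_card
  intro i hi
  simp only [Finset.mem_filter] at hi ⊢
  exact ⟨hi.1, le_trans h hi.2⟩

/-- The complement-position function: position `j` of row `i` corresponds to the
gap `ℓ - colLen j + (j-1)` in the β-set. -/
lemma phi_notMem (l : Partn) {j : ℕ} (hj : 1 ≤ j) :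
    l.parts.length - l.colLen j + (j - 1) ∉ l.betaSet := by
  intro hx
  obtain ⟨k, hk, hbk⟩ := mem_betaSet_iff.mp hx
  unfold beta at hbk
  rw [l.getD_eq hk] at hbk
  have hcle := l.colLen_le j
  by_cases hcase : j ≤ l.parts[k]
  · have h1 : k < l.colLen j := (l.lt_colLen_iff hk).mpr hcase
    omega
  · have h1 : ¬ k < l.colLen j := fun h => hcase ((l.lt_colLen_iff hk).mp h)
    omega

lemma card_beta_lt (l : Partn) {i : ℕ} (hi : i < l.parts.length) :
    (l.betaSet.filter (fun x => x < l.beta i)).card = l.parts.length - 1 - i := by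
  have heq : l.betaSet.filter (fun x => x < l.beta i)
      = (Finset.Ioo i l.parts.length).image l.beta := by
    ext x
    simp only [Finset.mem_filter, Finset.mem_image, Finset.mem_Ioo]
    constructor
    · rintro ⟨hx, hlt⟩
      obtain ⟨k, hk, rfl⟩ := mem_betaSet_iff.mp hx
      refine ⟨k, ⟨?_, hk⟩, rfl⟩
      by_contra hik
      rcases eq_or_lt_of_le (not_lt.mp hik) with rfl | h'
      · omega
      · have := l.beta_lt_beta h' hi
        omega
    · rintro ⟨k, ⟨hik, hk⟩, rfl⟩
      exact ⟨l.beta_mem hk, l.beta_lt_beta hik hk⟩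
  have hinj : Set.InjOn l.beta (Finset.Ioo i l.parts.length) := by
    intro a ha b hb h
    simp only [Finset.coe_Ioo, Set.mem_Ioo] at ha hb
    exact l.beta_injOn ha.2 hb.2 h
  rw [heq, Finset.card_image_of_injOn hinj, Nat.card_Ioo]
  omega

lemma beta_eq_hook_add (l : Partn) {i j : ℕ} (hi : i < l.parts.length) (hj1 : 1 ≤ j)
    (hj2 : j ≤ l.parts[i]) :
    l.beta i = l.hook i j + (l.parts.length - l.colLen j + (j - 1)) := by
  have hc1 : i < l.colLen j := (l.lt_colLen_iff hi).mpr hj2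
  have hc2 := l.colLen_le j
  unfold beta hook
  rw [l.getD_eq hi]
  omega

lemma hook_pos (l : Partn) (i j : ℕ) : 1 ≤ l.hook i j := by
  unfold hook; omega

theorem isCore_iff (l : Partn) {t : ℕ} (ht : 1 ≤ t) :
    l.IsCore t ↔ ∀ x ∈ l.betaSet, t ≤ x → x - t ∈ l.betaSet := by
  constructor
  · intro hcore x hx htx
    by_contra hnot
    obtain ⟨i, hi, hbi⟩ := mem_betaSet_iff.mp hx
    set φ : ℕ → ℕ := fun j => l.parts.length - l.colLen j + (j - 1) with hφ
    set T : Finset ℕ := (Finset.range (l.beta i)).filter (fun y => y ∉ l.betaSet) with hT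
    have hxt : x - t ∈ T := by
      rw [hT]
      simp only [Finset.mem_filter, Finset.mem_range]
      exact ⟨by omega, hnot⟩
    have himsub : (Finset.Icc 1 (l.parts[i])).image φ ⊆ T := by
      intro y hy
      obtain ⟨j, hjm, rfl⟩ := Finset.mem_image.mp hy
      simp only [Finset.mem_Icc] at hjm
      simp only [hT, Finset.mem_filter, Finset.mem_range]
      refine ⟨?_, l.phi_notMem hjm.1⟩
      have hc1 : i < l.colLen j := (l.lt_colLen_iff hi).mpr hjm.2
      have hc2 := l.colLen_le j
      have hbeta : l.beta i = l.parts[i] + (l.parts.length - 1 - i) := by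
        unfold beta; rw [l.getD_eq hi]
      simp only [hφ]
      omega
    have hinj : Set.InjOn φ (Finset.Icc 1 (l.parts[i])) := by
      have hmono : ∀ a b : ℕ, 1 ≤ a → a < b → φ a < φ b := by
        intro a b ha hab
        have h1 := l.colLen_anti (le_of_lt hab)
        have h2 := l.colLen_le a
        simp only [hφ]
        omega
      intro a ha b hb h
      simp only [Finset.coe_Icc, Set.mem_Icc] at ha hb
      rcases lt_trichotomy a b with h' | h' | h'
      · exact absurd h (by have := hmono a b ha.1 h'; omega)
      · exact h'
      · exact absurd h (by have := hmono b a hb.1 h'; omega)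
    have hcard : ((Finset.Icc 1 (l.parts[i])).image φ).card = T.card := by
      rw [Finset.card_image_of_injOn hinj, Nat.card_Icc]
      have hsplit := Finset.card_filter_add_card_filter_not
        (s := Finset.range (l.beta i)) (p := fun y => y ∈ l.betaSet)
      rw [Finset.card_range] at hsplit
      have hfe : (Finset.range (l.beta i)).filter (fun y => y ∈ l.betaSet)
          = l.betaSet.filter (fun x => x < l.beta i) := by
        ext y
        simp only [Finset.mem_filter, Finset.mem_range]
        exact ⟨fun h => ⟨h.2, h.1⟩, fun h => ⟨h.2, h.1⟩⟩
      rw [hfe, l.card_beta_lt hi] at hsplit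
      have hbeta : l.beta i = l.parts[i] + (l.parts.length - 1 - i) := by
        unfold beta; rw [l.getD_eq hi]
      have hTc : T.card = (Finset.filter (fun y => y ∉ l.betaSet) (Finset.range (l.beta i))).card := by
        rw [hT]
      omega
    have heqT : (Finset.Icc 1 (l.parts[i])).image φ = T :=
      Finset.eq_of_subset_of_card_le himsub (le_of_eq hcard.symm)
    obtain ⟨j, hjm, hjeq⟩ := Finset.mem_image.mp (heqT ▸ hxt)
    simp only [Finset.mem_Icc] at hjm
    have hbhook := l.beta_eq_hook_add hi hjm.1 hjm.2
    have hhook : l.hook i j = t := by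
      simp only [hφ] at hjeq
      omega
    refine hcore i j hi hjm.1 ?_ ?_
    · rw [l.getD_eq hi]; exact hjm.2
    · rw [hhook]
  · intro hcl i j hi hj1 hj2 hdvd
    rw [l.getD_eq hi] at hj2
    have hiter : ∀ (q x : ℕ), x ∈ l.betaSet → q * t ≤ x → x - q * t ∈ l.betaSet := by
      intro q
      induction q with
      | zero => intro x hx _; simpa using hx
      | succ p ih =>
        intro x hx hq
        have he : (p + 1) * t = p * t + t := by ring
        have h2 : x - p * t ∈ l.betaSet := ih x hx (by omega)
        have h1 : x - (p + 1) * t = (x - p * t) - t := by omega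
        rw [h1]
        exact hcl _ h2 (by omega)
    obtain ⟨q, hq⟩ := hdvd
    have hhp := l.hook_pos i j
    have hq1 : 1 ≤ q := by
      rcases Nat.eq_zero_or_pos q with rfl | h
      · omega
      · exact h
    have hbi := l.beta_eq_hook_add hi hj1 hj2
    have hqt : q * t = l.hook i j := by rw [hq]; ring
    have hmem : l.beta i - q * t ∈ l.betaSet := by
      apply hiter q _ (l.beta_mem hi)
      omega
    have : l.beta i - q * t = l.parts.length - l.colLen j + (j - 1) := by omega
    rw [this] at hmem
    exact l.phi_notMem hj1 hmem

/-- Build a partition with distinct parts from a β-set with no two consecutive elements. -/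
lemma exists_partn_of_beta (B : Finset ℕ) (h1 : ∀ x ∈ B, 1 ≤ x)
    (h2 : ∀ x ∈ B, x + 1 ∉ B) :
    ∃ mu : Partn, mu.betaSet = B ∧ mu.parts.length = B.card ∧ mu.DistinctParts := by
  classical
  set n := B.card with hn
  set L := B.sort (· ≤ ·) with hL
  have hlen : L.length = n := Finset.length_sort _
  have hmemL : ∀ x, x ∈ L ↔ x ∈ B := fun x => Finset.mem_sort _
  have hsl : L.Pairwise (· < ·) := B.sortedLT_sort.pairwise
  have hmono : ∀ a b (_ : a < b) (hb : b < L.length), L[a] < L[b] :=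
    fun a b hab hb => List.pairwise_iff_getElem.mp hsl a b (hab.trans hb) hb hab
  have hgap : ∀ a b (_ : a < b) (hb : b < L.length), L[a] + 2 ≤ L[b] := by
    intro a b hab hb
    have hm := hmono a b hab hb
    have hne : L[b] ≠ L[a] + 1 := by
      intro hh
      exact h2 L[a] ((hmemL _).mp (List.getElem_mem _)) (hh ▸ (hmemL _).mp (List.getElem_mem _))
    omega
  have hlow : ∀ a (ha : a < L.length), 2 * a + 1 ≤ L[a] := by
    intro a
    induction a with
    | zero => intro ha; simpa using h1 L[0] ((hmemL _).mp (List.getElem_mem _))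
    | succ k ih =>
      intro ha
      have hk : k < L.length := by omega
      have := ih hk
      have := hgap k (k + 1) (by omega) ha
      omega
  have hgap' : ∀ a b (_ : a < b) (hb : b < L.length), L[a] + (b - a) + 1 ≤ L[b] := by
    intro a b
    induction b with
    | zero => omega
    | succ c ih =>
      intro hab hb
      rcases Nat.lt_or_ge a c with h' | h'
      · have hc : c < L.length := by omega
        have := ih h' hc
        have := hmono c (c + 1) (by omega) hb
        omega
      · have hac : a = c := by omega
        subst hac
        have := hgap a (a + 1) (by omega) hb
        omega
  set f : Fin n → ℕ := fun k => L[n - 1 - k.val]'(by rw [hlen]; omega) - (n - 1 - k.val) with hf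
  have hf_lb : ∀ k : Fin n, (n - 1 - k.val) + 1 ≤ f k := by
    intro k
    have hj : n - 1 - k.val < L.length := by rw [hlen]; omega
    have := hlow (n - 1 - k.val) hj
    simp only [hf]
    omega
  have hf_strict : ∀ a b : Fin n, a.val < b.val → f b < f a := by
    intro a b hab
    have hja : n - 1 - a.val < L.length := by rw [hlen]; omega
    have hjb : n - 1 - b.val < L.length := by rw [hlen]; omega
    have hjj : n - 1 - a.val > n - 1 - b.val := by omega
    have hg := hgap' (n - 1 - b.val) (n - 1 - a.val) hjj hja
    have hlb := hlow (n - 1 - b.val) hjb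
    simp only [hf]
    omega
  refine ⟨⟨List.ofFn f, ?_, ?_⟩, ?_, ?_, ?_⟩
  · intro p hp
    rw [List.mem_ofFn] at hp
    obtain ⟨k, rfl⟩ := hp
    have := hf_lb k
    omega
  · refine List.pairwise_iff_getElem.mpr ?_
    intro a b ha hb hab
    rw [List.length_ofFn] at ha hb
    rw [List.getElem_ofFn, List.getElem_ofFn]
    exact le_of_lt (hf_strict ⟨a, ha⟩ ⟨b, hb⟩ hab)
  · -- betaSet = B
    have hplen : (List.ofFn f).length = n := List.length_ofFn
    unfold betaSet
    simp only
    ext x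
    simp only [Finset.mem_image, Finset.mem_range, hplen]
    constructor
    · rintro ⟨k, hk, rfl⟩
      have hj : n - 1 - k < L.length := by rw [hlen]; omega
      have hgd : (List.ofFn f).getD k 0 = f ⟨k, hk⟩ := by
        rw [List.getD_eq_getElem _ _ (by rw [hplen]; exact hk), List.getElem_ofFn]
      rw [hgd]
      have hl := hf_lb ⟨k, hk⟩
      have : f ⟨k, hk⟩ + (n - 1 - k) = L[n - 1 - k] := by
        simp only [hf]
        have := hlow (n - 1 - k) hj
        omega
      rw [this]
      exact (hmemL _).mp (List.getElem_mem _)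
    · intro hx
      obtain ⟨j, hj, hje⟩ := List.getElem_of_mem ((hmemL x).mpr hx)
      have hjn : j < n := by rw [← hlen]; exact hj
      refine ⟨n - 1 - j, by omega, ?_⟩
      have hk : n - 1 - j < n := by omega
      have hgd : (List.ofFn f).getD (n - 1 - j) 0 = f ⟨n - 1 - j, hk⟩ := by
        rw [List.getD_eq_getElem _ _ (by rw [hplen]; exact hk), List.getElem_ofFn]
      rw [hgd]
      have hjj : n - 1 - (n - 1 - j) = j := by omega
      simp only [hf, hjj]
      have := hlow j hj
      rw [hje] at *
      omega
  · exact (List.length_ofFn (f := f)).trans rfl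
  · unfold DistinctParts
    refine List.pairwise_iff_getElem.mpr ?_
    intro a b ha hb hab
    simp only [List.length_ofFn] at ha hb
    rw [List.getElem_ofFn, List.getElem_ofFn]
    exact hf_strict ⟨a, ha⟩ ⟨b, hb⟩ hab

/-- A downward-closed decidable predicate on `ℕ` bounded by `K` holds exactly below its count. -/
lemma downward_closed_count {P : ℕ → Prop} [DecidablePred P] {K c : ℕ}
    (hstep : ∀ a, P (a + 1) → P a) (hbound : ∀ a, P a → a < K)
    (hc : ((Finset.range K).filter (fun a => P a)).card = c) :
    ∀ a, P a ↔ a < c := by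
  have hdown : ∀ d a, P (a + d) → P a := by
    intro d
    induction d with
    | zero => intro a h; exact h
    | succ e ih => intro a h; exact ih a (hstep (a + e) (by rwa [show a + (e+1) = a + e + 1 by omega] at h))
  intro a
  constructor
  · intro hPa
    have hsub : Finset.range (a + 1) ⊆ (Finset.range K).filter (fun b => P b) := by
      intro b hb
      simp only [Finset.mem_range] at hb
      have hPb : P b := hdown (a - b) b (by rwa [show b + (a - b) = a by omega])
      simp only [Finset.mem_filter, Finset.mem_range]
      exact ⟨hbound b hPb, hPb⟩
    have := Finset.card_le_card hsub
    rw [Finset.card_range, hc] at this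
    omega
  · intro hac
    by_contra hPa
    have hsub : (Finset.range K).filter (fun b => P b) ⊆ Finset.range a := by
      intro b hb
      simp only [Finset.mem_filter, Finset.mem_range] at hb
      obtain ⟨hbK, hPb⟩ := hb
      simp only [Finset.mem_range]
      by_contra hba
      exact hPa (hdown (b - a) a (by rwa [show a + (b - a) = b by omega]))
    have := Finset.card_le_card hsub
    rw [Finset.card_range, hc] at this
    omega

end Partn

open Partn

/-- For a maximal-size `(t, mt+1)`-core partition with distinct parts, each `nᵢ(λ)`
is `0` or `m`. -/
theorem nFn_of_largest_t_mt_add_one (t m : ℕ) (ht : 2 ≤ t) (hm : 1 ≤ m) (lam : Partn)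
    (hlam : (lam.IsCore t ∧ lam.IsCore (m * t + 1) ∧ lam.DistinctParts))
    (hmax : ∀ mu : Partn, (mu.IsCore t ∧ mu.IsCore (m * t + 1) ∧ mu.DistinctParts) → mu.size ≤ lam.size) :
    ∀ i : ℕ, 1 ≤ i → i ≤ t - 1 → Partn.nFn t i lam = 0 ∨ Partn.nFn t i lam = m := by
  classical
  intro i hi1 hit
  have hit' : i < t := by omega
  obtain ⟨hcore_t, hcore_mt, hdist⟩ := hlam
  set B := lam.betaSet with hB
  have hcl_t : ∀ x ∈ B, t ≤ x → x - t ∈ B := (lam.isCore_iff (by omega)).mp hcore_t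
  have hcl_mt : ∀ x ∈ B, m * t + 1 ≤ x → x - (m * t + 1) ∈ B :=
    (lam.isCore_iff (by omega)).mp hcore_mt
  have hpos : ∀ x ∈ B, 1 ≤ x := fun x hx => Partn.one_le_of_mem_betaSet hx
  have hnc : ∀ x ∈ B, x + 1 ∉ B := by
    intro x hx hx1
    obtain ⟨k, hk, hbk⟩ := Partn.mem_betaSet_iff.mp hx
    obtain ⟨k', hk', hbk'⟩ := Partn.mem_betaSet_iff.mp hx1
    have hgap2 : ∀ a b, a < b → ∀ hb : b < lam.parts.length, lam.beta b + 2 ≤ lam.beta a := by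
      intro a b hab hb
      have hp := List.pairwise_iff_getElem.mp (show lam.parts.Pairwise (· > ·) from hdist) a b (hab.trans hb) hb hab
      unfold Partn.beta
      rw [lam.getD_eq hb, lam.getD_eq (hab.trans hb)]
      omega
    rcases lt_trichotomy k k' with h | h | h
    · have := hgap2 k k' h hk'; omega
    · subst h; omega
    · have := hgap2 k' k h hk; omega
  have hres : ∀ j, 1 ≤ j → j < t → ∀ a, (j + a * t ∈ B ↔ a < lam.nFn t j) := by
    intro j hj1 hjt
    have hstep : ∀ a, j + (a + 1) * t ∈ B → j + a * t ∈ B := by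
      intro a h
      have he : j + (a + 1) * t = (j + a * t) + t := by ring
      have h2 := hcl_t _ h (by omega)
      rwa [show j + (a + 1) * t - t = j + a * t by omega] at h2
    have hbound : ∀ a, j + a * t ∈ B → a < B.sup id + 1 := by
      intro a h
      have h1 : id (j + a * t) ≤ B.sup id := Finset.le_sup h
      have h2 : a ≤ a * t := Nat.le_mul_of_pos_right a (by omega)
      simp only [id] at h1
      omega
    have hcnt : ((Finset.range (B.sup id + 1)).filter (fun a => j + a * t ∈ B)).card
        = lam.nFn t j := by
      unfold Partn.nFn
      apply Finset.card_bij (fun a _ => j + a * t)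
      · intro a ha
        simp only [Finset.mem_filter, Finset.mem_range] at ha ⊢
        exact ⟨ha.2, by rw [Nat.add_mul_mod_self_right, Nat.mod_eq_of_lt hjt]⟩
      · intro a ha b hb h
        have h' : a * t = b * t := by omega
        exact Nat.eq_of_mul_eq_mul_right (by omega) h'
      · intro x hx
        simp only [Finset.mem_filter] at hx
        obtain ⟨hxB, hxm⟩ := hx
        have hcomm : (x / t) * t = t * (x / t) := Nat.mul_comm _ _
        have hdm := Nat.div_add_mod x t
        have hd : j + (x / t) * t = x := by omega
        refine ⟨x / t, ?_, hd⟩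
        simp only [Finset.mem_filter, Finset.mem_range]
        refine ⟨?_, by rwa [hd]⟩
        have h1 : id x ≤ B.sup id := Finset.le_sup hxB
        have h2 := Nat.div_le_self x t
        simp only [id] at h1
        omega
    exact Partn.downward_closed_count hstep hbound hcnt
  have h0 : ∀ q : ℕ, q * t ∉ B := by
    intro q
    induction q with
    | zero => intro h; have := hpos _ h; omega
    | succ p ih =>
      intro h
      have he : (p + 1) * t = p * t + t := by ring
      have h2 := hcl_t _ h (by omega)
      exact ih (by rwa [show (p + 1) * t - t = p * t by omega] at h2)
  have hF4 : ∀ j, 1 ≤ j → j < t → lam.nFn t j ≤ m := by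
    intro j hj1 hjt
    by_contra hgt
    have hmem : j + m * t ∈ B := (hres j hj1 hjt m).mpr (by omega)
    have h2 := hcl_mt _ hmem (by omega)
    rw [show j + m * t - (m * t + 1) = j - 1 by omega] at h2
    rcases Nat.eq_or_lt_of_le hj1 with h1 | h1
    · have := hpos _ h2; omega
    · exact hnc (j - 1) h2 (by
        rw [show j - 1 + 1 = j by omega]
        have := (hres j hj1 hjt 0).mpr (by omega)
        simpa using this)
  by_contra hcon
  push_neg at hcon
  obtain ⟨hne0, hnem⟩ := hcon
  set ni := lam.nFn t i with hni
  have hresi := hres i hi1 hit'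
  have hni1 : 1 ≤ ni := by omega
  have hnim : ni ≤ m := hF4 i hi1 hit'
  have hnim' : ni + 1 ≤ m := by omega
  have hiB : i ∈ B := by
    have := (hresi 0).mpr (by omega)
    simpa using this
  set w' := i + (ni - 1) * t with hw'
  set w := i + ni * t with hw
  have hww : w = w' + t := by
    have h1 : (ni - 1 + 1) * t = (ni - 1) * t + t := by ring
    rw [show ni - 1 + 1 = ni by omega] at h1
    omega
  have hw'B : w' ∈ B := (hresi (ni - 1)).mpr (by omega)
  have hwB : w ∉ B := fun h => by have := (hresi ni).mp h; omega
  have hwsucc : w + 1 ∉ B := by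
    rcases Nat.lt_or_ge (i + 1) t with hh | hh
    · intro h
      have h' : (i + 1) + ni * t ∈ B := by rwa [show w + 1 = (i + 1) + ni * t by omega] at h
      have h1 := (hres (i + 1) (by omega) hh ni).mp h'
      have h2 : (i + 1) ∈ B := by
        have := (hres (i + 1) (by omega) hh 0).mpr (by omega)
        simpa using this
      exact hnc i hiB h2
    · intro h
      have he : (ni + 1) * t = ni * t + t := by ring
      exact h0 (ni + 1) (by rwa [show w + 1 = (ni + 1) * t by omega] at h)
  have hwpred : w - 1 ∉ B := by
    rcases Nat.lt_or_ge 1 i with hh | hh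
    · intro h
      have h' : (i - 1) + ni * t ∈ B := by rwa [show w - 1 = (i - 1) + ni * t by omega] at h
      have h1 := (hres (i - 1) (by omega) (by omega) ni).mp h'
      have h2 : (i - 1) ∈ B := by
        have := (hres (i - 1) (by omega) (by omega) 0).mpr (by omega)
        simpa using this
      exact hnc (i - 1) h2 (by rwa [show i - 1 + 1 = i by omega])
    · intro h
      exact h0 ni (by rwa [show w - 1 = ni * t by omega] at h)
  have hboundB : ∀ x ∈ B, x + 2 ≤ m * t + 1 := by
    intro x hx
    have hcomm : (x / t) * t = t * (x / t) := Nat.mul_comm _ _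
    have hdm := Nat.div_add_mod x t
    have hx0 : x % t ≠ 0 := by
      intro h
      exact h0 (x / t) (by rwa [show x = (x / t) * t by omega] at hx)
    have hxt : x % t < t := Nat.mod_lt _ (by omega)
    have h1 : x / t < lam.nFn t (x % t) :=
      (hres (x % t) (by omega) hxt (x / t)).mp (by rwa [show x % t + (x / t) * t = x by omega])
    have h2 := hF4 (x % t) (by omega) hxt
    have h4 : (x / t) * t ≤ (m - 1) * t := Nat.mul_le_mul_right t (by omega)
    have h5 : (m - 1 + 1) * t = (m - 1) * t + t := by ring
    rw [show m - 1 + 1 = m by omega] at h5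
    omega
  have hwbound : w + 2 ≤ m * t + 1 := by
    have h4 : ni * t ≤ (m - 1) * t := Nat.mul_le_mul_right t (by omega)
    have h5 : (m - 1 + 1) * t = (m - 1) * t + t := by ring
    rw [show m - 1 + 1 = m by omega] at h5
    omega
  have hcardB : B.card = lam.parts.length := lam.card_betaSet
  have hsumB : ∑ x ∈ B, x = lam.size + ∑ r ∈ Finset.range lam.parts.length, r :=
    lam.sum_betaSet
  have hLpos : 1 ≤ lam.parts.length := by
    by_contra hLe
    have hBe : B = ∅ := Finset.card_eq_zero.mp (by omega)
    rw [hBe] at hw'B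
    simp at hw'B
  obtain ⟨mu, hmub, hmul, hmud⟩ := Partn.exists_partn_of_beta (insert w B)
    (by
      intro x hx
      rcases Finset.mem_insert.mp hx with rfl | hx'
      · omega
      · exact hpos x hx')
    (by
      intro x hx hx1
      rcases Finset.mem_insert.mp hx with rfl | hx' <;>
        rcases Finset.mem_insert.mp hx1 with he | hx1'
      · omega
      · exact hwsucc hx1'
      · exact hwpred (by rwa [show w - 1 = x by omega])
      · exact hnc x hx' hx1')
  have hmu_t : mu.IsCore t := by
    refine (mu.isCore_iff (by omega)).mpr ?_
    intro x hx htx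
    rw [hmub] at hx ⊢
    rcases Finset.mem_insert.mp hx with rfl | hx'
    · exact Finset.mem_insert_of_mem (by rwa [show w - t = w' by omega])
    · exact Finset.mem_insert_of_mem (hcl_t x hx' htx)
  have hmu_mt : mu.IsCore (m * t + 1) := by
    refine (mu.isCore_iff (by omega)).mpr ?_
    intro x hx htx
    exfalso
    rw [hmub] at hx
    rcases Finset.mem_insert.mp hx with rfl | hx'
    · omega
    · have := hboundB x hx'
      omega
  have hmusize := hmax mu ⟨hmu_t, hmu_mt, hmud⟩
  have hmuS : w + ∑ x ∈ B, x
      = mu.size + (∑ r ∈ Finset.range lam.parts.length, r + lam.parts.length) := by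
    have h := mu.sum_betaSet
    rw [hmub, Finset.sum_insert hwB, hmul, Finset.card_insert_of_notMem hwB, hcardB,
      Finset.sum_range_succ] at h
    exact h
  obtain ⟨nu, hnub, hnul, hnud⟩ := Partn.exists_partn_of_beta (B.erase w')
    (fun x hx => hpos x (Finset.mem_of_mem_erase hx))
    (fun x hx hx1 => hnc x (Finset.mem_of_mem_erase hx) (Finset.mem_of_mem_erase hx1))
  have hnu_t : nu.IsCore t := by
    refine (nu.isCore_iff (by omega)).mpr ?_
    intro x hx htx
    rw [hnub] at hx ⊢
    have hx' := Finset.mem_of_mem_erase hx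
    refine Finset.mem_erase.mpr ⟨?_, hcl_t x hx' htx⟩
    intro he
    exact hwB (by rwa [show x = w by omega] at hx')
  have hnu_mt : nu.IsCore (m * t + 1) := by
    refine (nu.isCore_iff (by omega)).mpr ?_
    intro x hx htx
    exfalso
    have := hboundB x (Finset.mem_of_mem_erase (hnub ▸ hx))
    omega
  have hnusize := hmax nu ⟨hnu_t, hnu_mt, hnud⟩
  have hsumerase : ∑ x ∈ B.erase w', x + w' = ∑ x ∈ B, x := Finset.sum_erase_add B _ hw'B
  have hnuS : ∑ x ∈ B.erase w', x
      = nu.size + ∑ r ∈ Finset.range (lam.parts.length - 1), r := by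
    have h := nu.sum_betaSet
    rw [hnub, hnul, Finset.card_erase_of_mem hw'B, hcardB] at h
    exact h
  have hrange : ∑ r ∈ Finset.range lam.parts.length, r
      = ∑ r ∈ Finset.range (lam.parts.length - 1), r + (lam.parts.length - 1) := by
    conv_lhs => rw [show lam.parts.length = (lam.parts.length - 1) + 1 by omega]
    rw [Finset.sum_range_succ]
  omega
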